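/- arXiv:1303.7383 — 6 statements merged into one kernel-verified Lean document; each statement's English description precedes it below -/
import Mathlib

section
/- Let R be a commutative ring and A an n×n skew-symmetric matrix over R (Aᵀ = −A). Let u be an index with v = u+1 also an index, and suppose A_{uv} = 0 (hence A_{vu} = 0). Let A⁺ be the matrix obtained from A by setting the (u,v) entry to 1 and the (v,u) entry to −1, leaving all other entries unchanged, and let A₀ denote the (n−2)×(n−2) matrix obtained from A by deleting row and column u and row and column v. Then, writing M = X·I − A for the characteristic matrix over R[X] and θ_{ij}(M) for the (i,j) entry of the adjugate adj(M), one has charpoly(A⁺) = charpoly(A₀) + charpoly(A) + θ_{uv}(M) − θ_{vu}(M). -/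
open Polynomial Matrix

section Aux

variable {S : Type*} [CommRing S] {n : ℕ}

theorem det_updateRow_sub' (M : Matrix (Fin n) (Fin n) S) (i : Fin n) (x y : Fin n → S) :
    (M.updateRow i (x - y)).det = (M.updateRow i x).det - (M.updateRow i y).det := by
  rw [sub_eq_add_neg, det_updateRow_add, show -y = (-1 : S) • y by simp,
    det_updateRow_smul]
  ring

/-- Equivalence splitting `Fin n` into `{u,v}ᶜ ⊕ Fin 2`. -/
def edgeEquiv (u v : Fin n) (huv : u ≠ v) :
    {i : Fin n // i ≠ u ∧ i ≠ v} ⊕ Fin 2 ≃ Fin n where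
  toFun x := match x with
    | Sum.inl i => (i : Fin n)
    | Sum.inr k => if k = 0 then u else v
  invFun i := if h1 : i = u then Sum.inr 0 else if h2 : i = v then Sum.inr 1
    else Sum.inl ⟨i, h1, h2⟩
  left_inv x := by
    rcases x with i | k
    · simp [i.2.1, i.2.2]
    · fin_cases k
      · simp
      · simp [Ne.symm huv]
  right_inv i := by
    by_cases h1 : i = u
    · simp [h1]
    · by_cases h2 : i = v
      · subst h2
        simp [h1]
      · simp [h1, h2]

@[simp] theorem edgeEquiv_inl (u v : Fin n) (huv : u ≠ v) (i : {i : Fin n // i ≠ u ∧ i ≠ v}) :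
    edgeEquiv u v huv (Sum.inl i) = (i : Fin n) := rfl

@[simp] theorem edgeEquiv_inr (u v : Fin n) (huv : u ≠ v) (k : Fin 2) :
    edgeEquiv u v huv (Sum.inr k) = if k = 0 then u else v := rfl

theorem det_two_single_rows (M : Matrix (Fin n) (Fin n) S) (u v : Fin n) (huv : u ≠ v) :
    ((M.updateRow u (Pi.single v 1)).updateRow v (Pi.single u 1)).det
      = - (M.submatrix (fun i : {i : Fin n // i ≠ u ∧ i ≠ v} => (i : Fin n))
          (fun j : {i : Fin n // i ≠ u ∧ i ≠ v} => (j : Fin n))).det := by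
  set N := (M.updateRow u (Pi.single v 1)).updateRow v (Pi.single u 1) with hN
  rw [← det_submatrix_equiv_self (edgeEquiv u v huv) N]
  have hB : N.submatrix (edgeEquiv u v huv) (edgeEquiv u v huv)
      = fromBlocks
        (M.submatrix (fun i : {i : Fin n // i ≠ u ∧ i ≠ v} => (i : Fin n))
          (fun j : {i : Fin n // i ≠ u ∧ i ≠ v} => (j : Fin n)))
        (N.submatrix (fun i : {i : Fin n // i ≠ u ∧ i ≠ v} => (i : Fin n))
          (fun k : Fin 2 => if k = 0 then u else v))
        0 !![0, 1; 1, 0] := by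
    ext i j
    rcases i with i | k <;> rcases j with j | k'
    · simp [hN, updateRow_apply, i.2.1, i.2.2]
    · simp [fromBlocks]
    · fin_cases k <;>
        simp [fromBlocks, hN, updateRow_apply, Ne.symm huv, huv,
          Pi.single_apply, Ne.symm j.2.1, Ne.symm j.2.2]
    · fin_cases k <;> fin_cases k' <;>
        simp [fromBlocks, hN, updateRow_apply, Ne.symm huv, huv, Pi.single_apply]
  rw [hB, det_fromBlocks_zero₂₁]
  have h2 : (!![(0:S), 1; 1, 0]).det = -1 := by simp [Matrix.det_fin_two]
  rw [h2]
  ring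

end Aux

/-- the "adding an edge" theorem for skew-symmetric matrices. -/
theorem charpoly_add_edge {R : Type*} [CommRing R] {n : ℕ}
    (A : Matrix (Fin n) (Fin n) R) (hskew : Aᵀ = -A)
    (u v : Fin n) (huv : (v : ℕ) = (u : ℕ) + 1) (h0 : A u v = 0) :
    (Matrix.of (fun i j : Fin n =>
        if i = u ∧ j = v then 1 else if i = v ∧ j = u then -1 else A i j)).charpoly
      = (A.submatrix (fun i : {i : Fin n // i ≠ u ∧ i ≠ v} => (i : Fin n))
          (fun j : {i : Fin n // i ≠ u ∧ i ≠ v} => (j : Fin n))).charpoly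
        + A.charpoly
        + (Matrix.charmatrix A).adjugate u v - (Matrix.charmatrix A).adjugate v u := by
  have hne : u ≠ v := by
    intro h
    rw [h] at huv
    omega
  have hvu : A v u = 0 := by
    have h := congrFun (congrFun hskew u) v
    simp only [transpose_apply, Matrix.neg_apply, h0, neg_zero] at h
    exact h
  set M := charmatrix A with hM
  -- charmatrix of A⁺ as row updates of M
  have hplus : charmatrix (Matrix.of (fun i j : Fin n =>
        if i = u ∧ j = v then (1:R) else if i = v ∧ j = u then -1 else A i j))
      = (M.updateRow u (M u - Pi.single v 1)).updateRow v (M v + Pi.single u 1) := by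
    apply Matrix.ext
    intro i j
    rcases eq_or_ne i v with rfl | hiv
    · rw [updateRow_self]
      rcases eq_or_ne j i with rfl | hjv
      · simp [hM, hne, Ne.symm hne, Pi.single_apply]
      · rcases eq_or_ne j u with rfl | hju
        · simp [hM, charmatrix_apply_ne _ _ _ (Ne.symm hjv), hne, Ne.symm hne, hvu,
            Pi.single_apply]
        · simp [hM, charmatrix_apply_ne _ _ _ (Ne.symm hjv), hne, Ne.symm hne, hju,
            Ne.symm hjv, Pi.single_apply, Ne.symm hju]
    · rw [updateRow_ne hiv]
      rcases eq_or_ne i u with rfl | hiu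
      · rw [updateRow_self]
        rcases eq_or_ne j v with rfl | hjv
        · simp [hM, charmatrix_apply_ne _ _ _ hne, h0, Pi.single_apply, Pi.sub_apply]
        · rcases eq_or_ne j i with rfl | hju
          · simp [hM, hjv, Pi.single_apply, Ne.symm hjv, Pi.sub_apply]
          · simp [hM, charmatrix_apply_ne _ _ _ (Ne.symm hju), hjv, Ne.symm hju,
              Pi.single_apply, Pi.sub_apply, hiv]
      · rw [updateRow_ne hiu]
        rcases eq_or_ne i j with rfl | hij
        · simp [hM, hiu, hiv]
        · simp [hM, charmatrix_apply_ne _ _ _ hij, hiu, hiv, hij]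
  -- submatrix of charmatrix is charmatrix of submatrix
  have hsub : (A.submatrix (fun i : {i : Fin n // i ≠ u ∧ i ≠ v} => (i : Fin n))
          (fun j : {i : Fin n // i ≠ u ∧ i ≠ v} => (j : Fin n))).charmatrix
      = M.submatrix (fun i : {i : Fin n // i ≠ u ∧ i ≠ v} => (i : Fin n))
          (fun j : {i : Fin n // i ≠ u ∧ i ≠ v} => (j : Fin n)) := by
    apply Matrix.ext
    intro i j
    rcases eq_or_ne i j with rfl | hij
    · simp [hM]
    · have h2 : (i : Fin n) ≠ (j : Fin n) := fun h => hij (Subtype.ext h)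
      simp [charmatrix_apply_ne _ _ _ hij, charmatrix_apply_ne _ _ _ h2, hM]
  unfold Matrix.charpoly
  rw [hplus, ← hM]
  rw [det_updateRow_add]
  have huv' : ((M.updateRow u (M u - Pi.single v 1)).updateRow v (M v))
      = M.updateRow u (M u - Pi.single v 1) := by
    conv_lhs => rw [show M v = (M.updateRow u (M u - Pi.single v 1)) v from
      (updateRow_ne (Ne.symm hne)).symm]
    exact updateRow_eq_self _ _
  rw [huv', det_updateRow_sub', updateRow_eq_self]
  -- second big term: rows u and v both updated
  have hcomm : ((M.updateRow u (M u - Pi.single v 1)).updateRow v (Pi.single u 1))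
      = ((M.updateRow v (Pi.single u 1)).updateRow u (M u - Pi.single v 1)) := by
    apply Matrix.ext
    intro i j
    rcases eq_or_ne i u with rfl | hiu
    · rw [updateRow_ne hne, updateRow_self, updateRow_self]
    · rcases eq_or_ne i v with rfl | hiv
      · rw [updateRow_self, updateRow_ne (Ne.symm hne), updateRow_self]
      · rw [updateRow_ne hiv, updateRow_ne hiu, updateRow_ne hiu, updateRow_ne hiv]
  rw [hcomm, det_updateRow_sub']
  have hMu : (M.updateRow v (Pi.single u 1)) u = M u := updateRow_ne hne
  rw [show ((M.updateRow v (Pi.single u 1)).updateRow u (M u)) =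
      M.updateRow v (Pi.single u 1) by rw [← hMu, updateRow_eq_self]]
  have hswap : ((M.updateRow v (Pi.single u 1)).updateRow u (Pi.single v 1))
      = ((M.updateRow u (Pi.single v 1)).updateRow v (Pi.single u 1)) := by
    apply Matrix.ext
    intro i j
    rcases eq_or_ne i u with rfl | hiu
    · rw [updateRow_self, updateRow_ne hne, updateRow_self]
    · rcases eq_or_ne i v with rfl | hiv
      · rw [updateRow_ne (Ne.symm hne), updateRow_self, updateRow_self]
      · rw [updateRow_ne hiu, updateRow_ne hiv, updateRow_ne hiv, updateRow_ne hiu]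
  rw [hswap, det_two_single_rows M u v hne, ← adjugate_apply, ← adjugate_apply, hsub]
  ring
end

section
/- Let R be a commutative ring and A an n×n skew-symmetric matrix over R (Aᵀ = −A). Let u be an index with v = u+1 also an index, suppose A_{uv} = 0, and suppose moreover that rows u and v agree off the pair {u,v}, i.e. A_{wu} = A_{wv} for every index w ∉ {u,v}. Let A⁺ be the matrix obtained from A by setting the (u,v) entry to 1 and the (v,u) entry to −1, and let A₀ be the matrix obtained from A by deleting rows and columns u and v. Then charpoly(A⁺) = charpoly(A₀) + charpoly(A). -/
open Polynomial Matrix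

set_option maxRecDepth 8000
set_option maxHeartbeats 1000000

/-- the "adding an edge" corollary when the two consecutive vertices
have the same neighbours. -/
theorem charpoly_add_edge_same_neighbours {R : Type*} [CommRing R] {n : ℕ}
    (A : Matrix (Fin n) (Fin n) R) (hskew : Aᵀ = -A)
    (u v : Fin n) (huv : (v : ℕ) = (u : ℕ) + 1) (h0 : A u v = 0)
    (hsame : ∀ w : Fin n, w ≠ u → w ≠ v → A w u = A w v) :
    (Matrix.of (fun i j : Fin n =>
        if i = u ∧ j = v then 1 else if i = v ∧ j = u then -1 else A i j)).charpoly
      = (A.submatrix (fun i : {i : Fin n // i ≠ u ∧ i ≠ v} => (i : Fin n))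
          (fun j : {i : Fin n // i ≠ u ∧ i ≠ v} => (j : Fin n))).charpoly
        + A.charpoly := by
  classical
  have hne : u ≠ v := by
    intro h; subst h; omega
  have hvu' : v ≠ u := Ne.symm hne
  have hA : ∀ i j, A i j = - A j i := by
    intro i j
    have := congrFun (congrFun hskew j) i
    simpa [Matrix.transpose_apply] using this
  have hvu : A v u = 0 := by rw [hA v u, h0, neg_zero]
  have hrow0 : ∀ c, c ≠ u → c ≠ v → A u c = A v c := by
    intro c hcu hcv
    rw [hA u c, hA v c, hsame c hcu hcv]
  clear hA hskew huv
  -- the charmatrix of the edge-added matrix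
  have key : charmatrix (Matrix.of fun i j : Fin n =>
      if i = u ∧ j = v then (1:R) else if i = v ∧ j = u then -1 else A i j)
      = ((charmatrix A).updateCol u
            (fun w => charmatrix A w u + (Pi.single v 1 : Fin n → R[X]) w)).updateCol v
          (fun w => charmatrix A w v + ((-1 : R[X]) • (Pi.single u 1 : Fin n → R[X])) w) := by
    refine Matrix.ext fun i j => ?_
    by_cases hiu : i = u <;> by_cases hiv : i = v <;> by_cases hju : j = u <;>
        by_cases hjv : j = v <;>
      simp_all [charmatrix_apply, diagonal_apply, updateCol_apply, Pi.single_apply] <;>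
      ring
  -- determinant expansion
  have hL : (Matrix.of fun i j : Fin n =>
      if i = u ∧ j = v then (1:R) else if i = v ∧ j = u then -1 else A i j).charpoly
      = (charmatrix A).det + ((charmatrix A).updateCol u (Pi.single v 1)).det
        - (((charmatrix A).updateCol v (Pi.single u 1)).det
          + (((charmatrix A).updateCol v (Pi.single u 1)).updateCol u
              (Pi.single v 1)).det) := by
    show (charmatrix _).det = _
    rw [key]
    have e1 : (fun w => charmatrix A w v + ((-1 : R[X]) • (Pi.single u 1 : Fin n → R[X])) w)
        = ((fun w => charmatrix A w v) + (-1 : R[X]) • (Pi.single u 1 : Fin n → R[X])) := rfl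
    rw [e1, det_updateCol_add, det_updateCol_smul]
    have e2 : ((charmatrix A).updateCol u
          (fun w => charmatrix A w u + (Pi.single v 1 : Fin n → R[X]) w)).updateCol v
          (fun w => charmatrix A w v)
        = (charmatrix A).updateCol u
            (fun w => charmatrix A w u + (Pi.single v 1 : Fin n → R[X]) w) := by
      refine Matrix.ext fun i j => ?_
      by_cases h : j = v <;> simp [h, updateCol_apply, hvu']
    have e3 : ((charmatrix A).updateCol u
          (fun w => charmatrix A w u + (Pi.single v 1 : Fin n → R[X]) w)).updateCol v
          (Pi.single u 1)
        = ((charmatrix A).updateCol v (Pi.single u 1)).updateCol u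
            ((fun w => charmatrix A w u) + (Pi.single v 1 : Fin n → R[X])) := by
      refine Matrix.ext fun i j => ?_
      by_cases hju : j = u <;> by_cases hjv : j = v <;>
        simp_all [updateCol_apply]
    have e4 : ((charmatrix A).updateCol v (Pi.single u 1)).updateCol u
          (fun w => charmatrix A w u) = (charmatrix A).updateCol v (Pi.single u 1) := by
      refine Matrix.ext fun i j => ?_
      by_cases h : j = u <;> simp [h, updateCol_apply, hne]
    have e5 : ((charmatrix A).updateCol u
          (fun w => charmatrix A w u + (Pi.single v 1 : Fin n → R[X]) w)).det
        = (charmatrix A).det + ((charmatrix A).updateCol u (Pi.single v 1)).det := by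
      have e : (fun w => charmatrix A w u + (Pi.single v 1 : Fin n → R[X]) w)
          = ((fun w => charmatrix A w u) + (Pi.single v 1 : Fin n → R[X])) := rfl
      rw [e, det_updateCol_add, updateCol_eq_self]
    rw [e2, e3, det_updateCol_add, e4, e5]
    ring
  -- Step A : the two adjugate-like terms agree
  have stepA : ((charmatrix A).updateCol u (Pi.single v 1)).det
      = ((charmatrix A).updateCol v (Pi.single u 1)).det := by
    have hsub : ((charmatrix A).updateCol u (Pi.single v 1)).submatrix
          (Equiv.swap u v) (Equiv.swap u v)
        = ((charmatrix A).updateCol v (Pi.single u 1)).updateRow u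
            (((charmatrix A).updateCol v (Pi.single u 1)) u
              + Pi.single u (charmatrix A v v - charmatrix A u u)) := by
      refine Matrix.ext fun w c => ?_
      by_cases hwu : w = u <;> by_cases hwv : w = v <;> by_cases hcu : c = u <;>
          by_cases hcv : c = v <;>
        simp_all [Equiv.swap_apply_left, Equiv.swap_apply_right,
          Equiv.swap_apply_of_ne_of_ne, updateCol_apply, updateRow_apply,
          submatrix_apply, Pi.single_apply, hsame, hrow0, charmatrix_apply,
          diagonal_apply, h0, hvu, eq_comm] <;>
        ring
    have h3 : (((charmatrix A).updateCol v (Pi.single u 1)).updateRow u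
          (Pi.single u (charmatrix A v v - charmatrix A u u))).det = 0 := by
      apply det_eq_zero_of_column_eq_zero v
      intro i
      by_cases hiu : i = u <;>
        simp [hiu, updateRow_apply, updateCol_apply, Pi.single_apply, hvu', hne]
    calc ((charmatrix A).updateCol u (Pi.single v 1)).det
        = (((charmatrix A).updateCol u (Pi.single v 1)).submatrix
            (Equiv.swap u v) (Equiv.swap u v)).det :=
          (det_submatrix_equiv_self _ _).symm
      _ = (((charmatrix A).updateCol v (Pi.single u 1)).updateRow u
            (((charmatrix A).updateCol v (Pi.single u 1)) u
              + Pi.single u (charmatrix A v v - charmatrix A u u))).det := by rw [hsub]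
      _ = ((charmatrix A).updateCol v (Pi.single u 1)).det
            + (((charmatrix A).updateCol v (Pi.single u 1)).updateRow u
              (Pi.single u (charmatrix A v v - charmatrix A u u))).det := by
          rw [det_updateRow_add, updateRow_eq_self]
      _ = ((charmatrix A).updateCol v (Pi.single u 1)).det := by rw [h3, add_zero]
  -- Step B : the remaining term is minus the charpoly of the minor
  have stepB : (((charmatrix A).updateCol v (Pi.single u 1)).updateCol u
        (Pi.single v 1)).det
      = -(A.submatrix (fun i : {i : Fin n // i ≠ u ∧ i ≠ v} => (i : Fin n))
          (fun j : {i : Fin n // i ≠ u ∧ i ≠ v} => (j : Fin n))).charpoly := by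
    have hswap : ((charmatrix A).updateCol v (Pi.single u 1)).updateCol u
          (Pi.single v 1)
        = (((charmatrix A).updateCol u (Pi.single u 1)).updateCol v
            (Pi.single v 1)).submatrix id (Equiv.swap u v) := by
      refine Matrix.ext fun w c => ?_
      by_cases hcu : c = u <;> by_cases hcv : c = v <;>
        simp_all [Equiv.swap_apply_left, Equiv.swap_apply_right,
          Equiv.swap_apply_of_ne_of_ne, updateCol_apply, submatrix_apply]
    have hEdet : (((charmatrix A).updateCol u (Pi.single u 1)).updateCol v
          (Pi.single v 1)).det
        = (A.submatrix (fun i : {i : Fin n // i ≠ u ∧ i ≠ v} => (i : Fin n))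
            (fun j : {i : Fin n // i ≠ u ∧ i ≠ v} => (j : Fin n))).charpoly := by
      rw [← det_submatrix_equiv_self (Equiv.sumCompl (fun i : Fin n => i ≠ u ∧ i ≠ v))]
      have hblocks : (((charmatrix A).updateCol u (Pi.single u 1)).updateCol v
            (Pi.single v 1)).submatrix
            (Equiv.sumCompl (fun i : Fin n => i ≠ u ∧ i ≠ v))
            (Equiv.sumCompl (fun i : Fin n => i ≠ u ∧ i ≠ v))
          = fromBlocks
              (charmatrix (A.submatrix (fun i : {i : Fin n // i ≠ u ∧ i ≠ v} => (i : Fin n))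
                (fun j : {i : Fin n // i ≠ u ∧ i ≠ v} => (j : Fin n))))
              0
              (Matrix.of fun (i : {i : Fin n // ¬(i ≠ u ∧ i ≠ v)})
                  (j : {i : Fin n // i ≠ u ∧ i ≠ v}) =>
                (((charmatrix A).updateCol u (Pi.single u 1)).updateCol v
                  (Pi.single v 1)) (i : Fin n) (j : Fin n))
              1 := by
        refine Matrix.ext fun i j => ?_
        cases i with
        | inl i =>
          cases j with
          | inl j =>
            simp [submatrix_apply, updateCol_apply, j.2.1, j.2.2, charmatrix_apply,
              diagonal_apply, Subtype.ext_iff, Equiv.sumCompl_apply_inl]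
          | inr j =>
            have hj : (j : Fin n) = u ∨ (j : Fin n) = v := by
              rcases j with ⟨j, hj⟩
              by_contra hcon
              push_neg at hcon
              exact hj ⟨hcon.1, hcon.2⟩
            rcases hj with hj | hj <;>
              simp [updateCol_apply, hj, Pi.single_apply, i.2.1, i.2.2, hvu', hne,
                Ne.symm i.2.1, Ne.symm i.2.2]
        | inr i =>
          cases j with
          | inl j =>
            simp
          | inr j =>
            have hi : (i : Fin n) = u ∨ (i : Fin n) = v := by
              rcases i with ⟨i, hi⟩
              by_contra hcon
              push_neg at hcon
              exact hi ⟨hcon.1, hcon.2⟩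
            have hj : (j : Fin n) = u ∨ (j : Fin n) = v := by
              rcases j with ⟨j, hj⟩
              by_contra hcon
              push_neg at hcon
              exact hj ⟨hcon.1, hcon.2⟩
            rcases hi with hi | hi <;> rcases hj with hj | hj <;>
              simp [updateCol_apply, hi, hj, Pi.single_apply, one_apply,
                Subtype.ext_iff, hvu', hne]
      rw [hblocks, det_fromBlocks_zero₁₂, det_one, mul_one]
      rfl
    rw [hswap, det_permute', Equiv.Perm.sign_swap hne, hEdet]
    simp
  have hAchar : A.charpoly = (charmatrix A).det := rfl
  rw [hL, stepA, stepB, hAchar]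
  ring
end

section
/- Let A be an n×n rational matrix and B an m×m rational matrix, each a skew-adjacency matrix of a linearly ordered graph (i.e. Aᵀ = −A with every entry of A above the diagonal in {0,1}, and likewise for B), with n, m ≥ 1. Let J denote the n×m all-ones matrix, and let M = [[A, J],[−Jᵀ, B]] be the (n+m)×(n+m) skew-adjacency matrix of the join. For a k×k skew-adjacency matrix C, let cone(C) denote the (k+1)×(k+1) matrix whose first row is (0,1,1,…,1), whose first column is (0,−1,−1,…,−1)ᵀ, and whose remaining k×k block is C. Then charpoly(M) = charpoly(A)·charpoly(B) + (charpoly(cone(A)) − X·charpoly(A)) · (charpoly(cone(B)) − X·charpoly(B)) in ℚ[X]. -/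
open Polynomial Matrix

set_option synthInstance.maxHeartbeats 1000000
set_option maxHeartbeats 1000000

noncomputable section CharpolyJoinAux

abbrev Kfield : Type := RatFunc ℚ
abbrev phi : ℚ[X] →+* Kfield := algebraMap ℚ[X] Kfield

lemma phi_inj : Function.Injective phi := IsFractionRing.injective ℚ[X] Kfield

def cm {k : ℕ} (C : Matrix (Fin k) (Fin k) ℚ) : Matrix (Fin k) (Fin k) Kfield :=
  (charmatrix C).map phi

lemma det_cm {k : ℕ} (C : Matrix (Fin k) (Fin k) ℚ) : (cm C).det = phi C.charpoly := by
  rw [cm, Matrix.charpoly, RingHom.map_det, RingHom.mapMatrix_apply]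

lemma isUnit_det_cm {k : ℕ} (C : Matrix (Fin k) (Fin k) ℚ) : IsUnit (cm C).det := by
  rw [det_cm, isUnit_iff_ne_zero, Ne, map_eq_zero_iff phi phi_inj]
  exact (Matrix.charpoly_monic C).ne_zero

def sC {k : ℕ} (C : Matrix (Fin k) (Fin k) ℚ) : Kfield :=
  (replicateRow (Fin 1) (fun _ : Fin k => (1:Kfield)) * (cm C)⁻¹ * replicateCol (Fin 1) (fun _ : Fin k => (1:Kfield))) 0 0

lemma one_by_one (M : Matrix (Fin 1) (Fin 1) Kfield) :
    M = M 0 0 • (1 : Matrix (Fin 1) (Fin 1) Kfield) := by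
  ext i j
  fin_cases i <;> fin_cases j <;> simp

end CharpolyJoinAux

section More


/-- The skew-adjacency matrix of the join of a single (first) vertex with the
linearly ordered graph whose skew-adjacency matrix is `C`. -/
def cone {k : ℕ} (C : Matrix (Fin k) (Fin k) ℚ) :
    Matrix (Fin 1 ⊕ Fin k) (Fin 1 ⊕ Fin k) ℚ :=
  Matrix.fromBlocks 0 (Matrix.of fun _ _ => 1) (Matrix.of fun _ _ => -1) C

lemma cm_cone {k : ℕ} (C : Matrix (Fin k) (Fin k) ℚ) :
    (charmatrix (cone C)).map phi =
      fromBlocks (Matrix.of fun _ _ => phi X)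
        (-(replicateRow (Fin 1) (fun _ : Fin k => (1:Kfield))))
        (replicateCol (Fin 1) (fun _ : Fin k => (1:Kfield))) (cm C) := by
  ext i j
  cases i <;> cases j <;>
    simp [cone, charmatrix_fromBlocks, fromBlocks, charmatrix_apply, cm, Matrix.map_apply,
      diagonal, Fin.eq_zero, one_apply]

lemma phi_charpoly_cone {k : ℕ} (C : Matrix (Fin k) (Fin k) ℚ) :
    phi (cone C).charpoly = phi C.charpoly * (phi X + sC C) := by
  haveI : Invertible (cm C) := (cm C).invertibleOfIsUnitDet (isUnit_det_cm C)
  rw [Matrix.charpoly, RingHom.map_det, RingHom.mapMatrix_apply, cm_cone, det_fromBlocks₂₂,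
    det_cm, invOf_eq_nonsing_inv, Matrix.neg_mul, Matrix.neg_mul, sub_neg_eq_add]
  congr 1
  rw [det_fin_one]
  simp [sC]
end More

lemma my_det_add_col_mul_row {p : ℕ} (Mx : Matrix (Fin p) (Fin p) Kfield)
    (h : IsUnit Mx.det) (u v : Fin p → Kfield) :
    (Mx + replicateCol (Fin 1) u * replicateRow (Fin 1) v).det = Mx.det * (1 + v ⬝ᵥ Mx⁻¹ *ᵥ u) := by
  have step : Mx + replicateCol (Fin 1) u * replicateRow (Fin 1) v
      = Mx * (1 + replicateCol (Fin 1) (Mx⁻¹ *ᵥ u) * replicateRow (Fin 1) v) := by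
    rw [Matrix.mul_add, Matrix.mul_one, replicateCol_mulVec, ← Matrix.mul_assoc,
      ← Matrix.mul_assoc, Matrix.mul_nonsing_inv _ h, Matrix.one_mul]
  rw [step, det_mul]
  exact congrArg _ (det_one_add_replicateCol_mul_replicateRow _ _)

lemma ones_eq (p q : ℕ) :
    (Matrix.of fun _ _ => (1:Kfield) : Matrix (Fin p) (Fin q) Kfield)
      = replicateCol (Fin 1) (fun _ : Fin p => (1:Kfield)) * replicateRow (Fin 1) (fun _ : Fin q => (1:Kfield)) := by
  ext i j; simp [mul_apply]

/-- the join theorem for skew-adjacency matrices of linearly ordered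
graphs. -/
theorem charpoly_join {n m : ℕ} (hn : 1 ≤ n) (hm : 1 ≤ m)
    (A : Matrix (Fin n) (Fin n) ℚ) (B : Matrix (Fin m) (Fin m) ℚ)
    (hAskew : Aᵀ = -A) (hA01 : ∀ i j : Fin n, i < j → A i j = 0 ∨ A i j = 1)
    (hBskew : Bᵀ = -B) (hB01 : ∀ i j : Fin m, i < j → B i j = 0 ∨ B i j = 1) :
    (Matrix.fromBlocks A (Matrix.of fun _ _ => (1 : ℚ))
        (Matrix.of fun _ _ => (-1 : ℚ)) B).charpoly
      = A.charpoly * B.charpoly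
        + ((cone A).charpoly - X * A.charpoly) * ((cone B).charpoly - X * B.charpoly) := by
  apply phi_inj
  haveI : Invertible (cm A) := (cm A).invertibleOfIsUnitDet (isUnit_det_cm A)
  have hJ : (charmatrix (Matrix.fromBlocks A (Matrix.of fun _ _ => (1 : ℚ))
        (Matrix.of fun _ _ => (-1 : ℚ)) B)).map phi
      = fromBlocks (cm A) (-(Matrix.of fun _ _ => (1:Kfield)))
          (Matrix.of fun _ _ => (1:Kfield)) (cm B) := by
    ext i j
    cases i <;> cases j <;>
      simp [charmatrix_fromBlocks, fromBlocks, charmatrix_apply, cm, Matrix.map_apply, diagonal]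
  have key : phi (Matrix.fromBlocks A (Matrix.of fun _ _ => (1 : ℚ))
        (Matrix.of fun _ _ => (-1 : ℚ)) B).charpoly
      = phi A.charpoly * (phi B.charpoly * (1 + sC A * sC B)) := by
    rw [Matrix.charpoly, RingHom.map_det, RingHom.mapMatrix_apply, hJ, det_fromBlocks₁₁,
      det_cm, invOf_eq_nonsing_inv, Matrix.mul_neg, sub_neg_eq_add]
    congr 1
    have e1 : (Matrix.of fun _ _ => (1:Kfield) : Matrix (Fin m) (Fin n) Kfield) * (cm A)⁻¹ *
          (Matrix.of fun _ _ => (1:Kfield) : Matrix (Fin n) (Fin m) Kfield)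
        = replicateCol (Fin 1) (fun _ : Fin m => sC A) * replicateRow (Fin 1) (fun _ : Fin m => (1:Kfield)) := by
      ext i j
      simp [mul_apply, sC, Fin.sum_univ_one]
    rw [e1, my_det_add_col_mul_row _ (isUnit_det_cm B), det_cm]
    congr 1
    have : sC B = (fun _ : Fin m => (1:Kfield)) ⬝ᵥ (cm B)⁻¹ *ᵥ (fun _ : Fin m => (1:Kfield)) := by
      simp [sC, dotProduct, mulVec, mul_apply, Fin.sum_univ_one]
      exact Finset.sum_comm
    simp [dotProduct, mulVec, Finset.mul_sum, Finset.sum_mul, this, sC, mul_apply,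
      Fin.sum_univ_one, mul_comm]
    rw [Finset.sum_comm]
  rw [key]
  simp only [map_add, _root_.map_mul, map_sub, phi_charpoly_cone]
  ring
end

section
/- Let R be a commutative ring and let p, q, r, s be natural numbers. Let A (p×p), B (p×q), C (q×p), D (q×q), E (r×r), F (r×s), G (s×r), H (s×s) be matrices over R, and let α ∈ R^p, β ∈ R^q, γ ∈ R^r, δ ∈ R^s be column vectors. Define the following square matrices: M_G = [[A, α, B],[−αᵀ, 0, βᵀ],[C, −β, D]] of size p+1+q; M_{G−u} = [[A, B],[C, D]] of size p+q; M_{H−v} = [[E, F],[G, H]] of size r+s; M_{H↔v} = [[0, γᵀ, δᵀ],[−γ, E, F],[−δ, G, H]] of size 1+r+s; and the coalescence matrix M = [[A, α, B, 0, 0],[−αᵀ, 0, βᵀ, γᵀ, δᵀ],[C, −β, D, 0, 0],[0, −γ, 0, E, F],[0, −δ, 0, G, H]] of size p+1+q+r+s. Then charpoly(M) = charpoly(M_G)·charpoly(M_{H−v}) + charpoly(M_{G−u})·charpoly(M_{H↔v}) − X·charpoly(M_{G−u})·charpoly(M_{H−v}) in R[X]. -/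
open Polynomial Matrix


private lemma det_coalescence_aux {S : Type*} [CommRing S] {k l : Type*}
    [Fintype k] [Fintype l] [DecidableEq k] [DecidableEq l]
    (P : Matrix k k S) (Q : Matrix l l S)
    (ρ σ : k → S) (τ υ : l → S) (x : S) :
    (Matrix.fromBlocks P
      (Matrix.of fun i j => Sum.elim (fun _ : Fin 1 => σ i) (fun _ : l => (0:S)) j)
      (Matrix.of fun i j => Sum.elim (fun _ : Fin 1 => ρ j) (fun _ : l => (0:S)) i)
      (Matrix.fromBlocks (Matrix.of fun _ _ => x) (Matrix.of fun _ j => τ j)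
        (Matrix.of fun i _ => υ i) Q)).det
    = (Matrix.fromBlocks P (Matrix.of fun i (_ : Fin 1) => σ i)
        (Matrix.of fun (_ : Fin 1) j => ρ j) (Matrix.of fun _ _ => x)).det * Q.det
      + P.det * (Matrix.fromBlocks (Matrix.of fun (_ : Fin 1) (_ : Fin 1) => x)
          (Matrix.of fun _ j => τ j) (Matrix.of fun i _ => υ i) Q).det
      - x * P.det * Q.det := by
  classical
  set W : Matrix (k ⊕ (Fin 1 ⊕ l)) (k ⊕ (Fin 1 ⊕ l)) S :=
    Matrix.fromBlocks P
      (Matrix.of fun i j => Sum.elim (fun _ : Fin 1 => σ i) (fun _ : l => (0:S)) j)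
      (Matrix.of fun i j => Sum.elim (fun _ : Fin 1 => ρ j) (fun _ : l => (0:S)) i)
      (Matrix.fromBlocks (Matrix.of fun _ _ => x) (Matrix.of fun _ j => τ j)
        (Matrix.of fun i _ => υ i) Q) with hW
  set u : k ⊕ (Fin 1 ⊕ l) := Sum.inr (Sum.inl 0) with hu
  set r1 : k ⊕ (Fin 1 ⊕ l) → S :=
    Sum.elim ρ (Sum.elim (fun _ => x) (fun _ => 0)) with hr1
  set r2 : k ⊕ (Fin 1 ⊕ l) → S :=
    Sum.elim (fun _ => 0) (Sum.elim (fun _ => 0) τ) with hr2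
  set c1 : k ⊕ (Fin 1 ⊕ l) → S :=
    Sum.elim σ (Sum.elim (fun _ => 0) (fun _ => 0)) with hc1
  set c2 : k ⊕ (Fin 1 ⊕ l) → S :=
    Sum.elim (fun _ => 0) (Sum.elim (fun _ => 0) υ) with hc2
  have hrow : W u = r1 + r2 := by
    funext j
    rcases j with j | j | j <;> simp [hW, hr1, hr2, hu, eq_iff_true_of_subsingleton]
  have hsplit : W.det = (W.updateRow u r1).det + (W.updateRow u r2).det := by
    conv_lhs => rw [← Matrix.updateRow_eq_self W u, hrow]
    exact Matrix.det_updateRow_add W u r1 r2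
  -- first term
  have hT1 : (W.updateRow u r1).det
      = (Matrix.fromBlocks P (Matrix.of fun i (_ : Fin 1) => σ i)
          (Matrix.of fun (_ : Fin 1) j => ρ j) (Matrix.of fun _ _ => x)).det * Q.det := by
    rw [← Matrix.det_submatrix_equiv_self (Equiv.sumAssoc k (Fin 1) l) (W.updateRow u r1)]
    have heq : (W.updateRow u r1).submatrix (Equiv.sumAssoc k (Fin 1) l)
        (Equiv.sumAssoc k (Fin 1) l)
        = Matrix.fromBlocks
            (Matrix.fromBlocks P (Matrix.of fun i (_ : Fin 1) => σ i)
              (Matrix.of fun (_ : Fin 1) j => ρ j) (Matrix.of fun _ _ => x))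
            0
            (Matrix.of fun i j => Sum.elim (fun _ : k => (0:S)) (fun _ : Fin 1 => υ i) j)
            Q := by
      ext i j
      rcases i with (i | i) | i <;> rcases j with (j | j) | j <;>
        simp [hW, hr1, hu, Matrix.updateRow_apply, Equiv.sumAssoc, eq_iff_true_of_subsingleton]
    rw [heq, Matrix.det_fromBlocks_zero₁₂]
  -- second term: split the column
  have hcol : (fun i => (W.updateRow u r2) i u) = c1 + c2 := by
    funext i
    rcases i with i | i | i <;>
      simp [hW, hr2, hc1, hc2, hu, Matrix.updateRow_apply, eq_iff_true_of_subsingleton]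
  have hsplit2 : (W.updateRow u r2).det
      = ((W.updateRow u r2).updateCol u c1).det
        + ((W.updateRow u r2).updateCol u c2).det := by
    conv_lhs => rw [← Matrix.updateCol_eq_self (W.updateRow u r2) u, hcol]
    exact Matrix.det_updateCol_add _ u c1 c2
  have hT2a : ((W.updateRow u r2).updateCol u c1).det = 0 := by
    have heq : (W.updateRow u r2).updateCol u c1
        = Matrix.fromBlocks P
            (Matrix.of fun i j => Sum.elim (fun _ : Fin 1 => σ i) (fun _ : l => (0:S)) j)
            0
            (Matrix.fromBlocks (Matrix.of fun _ _ => (0:S)) (Matrix.of fun _ j => τ j)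
              0 Q) := by
      ext i j
      rcases i with i | i | i <;> rcases j with j | j | j <;>
        simp [hW, hr2, hc1, hu, Matrix.updateRow_apply, Matrix.updateCol_apply, eq_iff_true_of_subsingleton]
    rw [heq, Matrix.det_fromBlocks_zero₂₁, Matrix.det_fromBlocks_zero₂₁]
    simp [Matrix.det_fin_one]
  have hT2b : ((W.updateRow u r2).updateCol u c2).det
      = P.det * ((Matrix.fromBlocks (Matrix.of fun (_ : Fin 1) (_ : Fin 1) => x)
          (Matrix.of fun _ j => τ j) (Matrix.of fun i _ => υ i) Q).det - x * Q.det) := by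
    have heq : (W.updateRow u r2).updateCol u c2
        = Matrix.fromBlocks P 0 0
            (Matrix.fromBlocks (Matrix.of fun _ _ => (0:S)) (Matrix.of fun _ j => τ j)
              (Matrix.of fun i _ => υ i) Q) := by
      ext i j
      rcases i with i | i | i <;> rcases j with j | j | j <;>
        simp [hW, hr2, hc2, hu, Matrix.updateRow_apply, Matrix.updateCol_apply, eq_iff_true_of_subsingleton]
    rw [heq, Matrix.det_fromBlocks_zero₁₂]
    congr 1
    -- split the first row of the promoted matrix
    have hrow2 : (Matrix.fromBlocks (Matrix.of fun (_ : Fin 1) (_ : Fin 1) => x)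
        (Matrix.of fun _ j => τ j) (Matrix.of fun i _ => υ i) Q) (Sum.inl 0)
        = Sum.elim (fun _ => x) (fun _ => 0) + Sum.elim (fun _ => 0) τ := by
      funext j
      rcases j with j | j <;> simp
    have h3 : (Matrix.fromBlocks (Matrix.of fun (_ : Fin 1) (_ : Fin 1) => x)
          (Matrix.of fun _ j => τ j) (Matrix.of fun i _ => υ i) Q).det
        = ((Matrix.fromBlocks (Matrix.of fun (_ : Fin 1) (_ : Fin 1) => x)
            (Matrix.of fun _ j => τ j) (Matrix.of fun i _ => υ i) Q).updateRow (Sum.inl 0)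
            (Sum.elim (fun _ => x) (fun _ => 0))).det
          + ((Matrix.fromBlocks (Matrix.of fun (_ : Fin 1) (_ : Fin 1) => x)
            (Matrix.of fun _ j => τ j) (Matrix.of fun i _ => υ i) Q).updateRow (Sum.inl 0)
            (Sum.elim (fun _ => 0) τ)).det := by
      conv_lhs => rw [← Matrix.updateRow_eq_self (Matrix.fromBlocks _ _ _ Q) (Sum.inl 0), hrow2]
      exact Matrix.det_updateRow_add _ _ _ _
    have h4 : ((Matrix.fromBlocks (Matrix.of fun (_ : Fin 1) (_ : Fin 1) => x)
        (Matrix.of fun _ j => τ j) (Matrix.of fun i _ => υ i) Q).updateRow (Sum.inl 0)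
        (Sum.elim (fun _ => x) (fun _ => 0)))
        = Matrix.fromBlocks (Matrix.of fun (_ : Fin 1) (_ : Fin 1) => x) 0
            (Matrix.of fun i _ => υ i) Q := by
      ext i j
      rcases i with i | i <;> rcases j with j | j <;>
        simp [Matrix.updateRow_apply, eq_iff_true_of_subsingleton]
    have h5 : ((Matrix.fromBlocks (Matrix.of fun (_ : Fin 1) (_ : Fin 1) => x)
        (Matrix.of fun _ j => τ j) (Matrix.of fun i _ => υ i) Q).updateRow (Sum.inl 0)
        (Sum.elim (fun _ => 0) τ))
        = Matrix.fromBlocks (Matrix.of fun _ _ => (0:S)) (Matrix.of fun _ j => τ j)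
            (Matrix.of fun i _ => υ i) Q := by
      ext i j
      rcases i with i | i <;> rcases j with j | j <;>
        simp [Matrix.updateRow_apply, eq_iff_true_of_subsingleton]
    rw [h4, h5] at h3
    rw [Matrix.det_fromBlocks_zero₁₂] at h3
    have h6 : (Matrix.of fun (_ : Fin 1) (_ : Fin 1) => x).det = x := by
      rw [Matrix.det_fin_one]; rfl
    rw [h6] at h3
    linear_combination -h3
  rw [hsplit, hsplit2, hT1, hT2a, hT2b]
  ring


private def eqG2 (p q : ℕ) : (Fin p ⊕ Fin q) ⊕ Fin 1 ≃ Fin p ⊕ (Fin 1 ⊕ Fin q) where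
  toFun x := match x with
    | .inl (.inl a) => .inl a
    | .inl (.inr b) => .inr (.inr b)
    | .inr t => .inr (.inl t)
  invFun x := match x with
    | .inl a => .inl (.inl a)
    | .inr (.inl t) => .inr t
    | .inr (.inr b) => .inl (.inr b)
  left_inv := by rintro ((a | b) | t) <;> rfl
  right_inv := by rintro (a | (t | b)) <;> rfl

private def eqM (p q r s : ℕ) :
    (Fin p ⊕ Fin q) ⊕ (Fin 1 ⊕ (Fin r ⊕ Fin s)) ≃
      Fin p ⊕ (Fin 1 ⊕ (Fin q ⊕ (Fin r ⊕ Fin s))) where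
  toFun x := match x with
    | .inl (.inl a) => .inl a
    | .inl (.inr b) => .inr (.inr (.inl b))
    | .inr (.inl t) => .inr (.inl t)
    | .inr (.inr (.inl c)) => .inr (.inr (.inr (.inl c)))
    | .inr (.inr (.inr d)) => .inr (.inr (.inr (.inr d)))
  invFun x := match x with
    | .inl a => .inl (.inl a)
    | .inr (.inl t) => .inr (.inl t)
    | .inr (.inr (.inl b)) => .inl (.inr b)
    | .inr (.inr (.inr (.inl c))) => .inr (.inr (.inl c))
    | .inr (.inr (.inr (.inr d))) => .inr (.inr (.inr d))
  left_inv := by rintro ((a | b) | (t | (c | d))) <;> rfl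
  right_inv := by rintro (a | (t | (b | (c | d)))) <;> rfl

/-- the coalescence theorem for characteristic polynomials of
skew-adjacency matrices of linearly ordered graphs. -/
theorem charpoly_coalescence {R : Type*} [CommRing R] {p q r s : ℕ}
    (A : Matrix (Fin p) (Fin p) R) (B : Matrix (Fin p) (Fin q) R)
    (C : Matrix (Fin q) (Fin p) R) (D : Matrix (Fin q) (Fin q) R)
    (E : Matrix (Fin r) (Fin r) R) (F : Matrix (Fin r) (Fin s) R)
    (G : Matrix (Fin s) (Fin r) R) (H : Matrix (Fin s) (Fin s) R)
    (α : Fin p → R) (β : Fin q → R) (γ : Fin r → R) (δ : Fin s → R)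
    -- `M_G` : the skew-adjacency matrix of `G`, with distinguished middle vertex `u`
    (MG : Matrix (Fin p ⊕ (Fin 1 ⊕ Fin q)) (Fin p ⊕ (Fin 1 ⊕ Fin q)) R)
    (hMG : MG = Matrix.fromBlocks A
      (Matrix.of fun i j => Sum.elim (fun _ => α i) (fun b => B i b) j)
      (Matrix.of fun i j => Sum.elim (fun _ => -α j) (fun a => C a j) i)
      (Matrix.fromBlocks 0 (Matrix.of fun _ b => β b) (Matrix.of fun a _ => -β a) D))
    -- `M_{G-u}`
    (MGu : Matrix (Fin p ⊕ Fin q) (Fin p ⊕ Fin q) R)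
    (hMGu : MGu = Matrix.fromBlocks A B C D)
    -- `M_{H-v}`
    (MHv : Matrix (Fin r ⊕ Fin s) (Fin r ⊕ Fin s) R)
    (hMHv : MHv = Matrix.fromBlocks E F G H)
    -- `M_{H↔v}` : vertex `v` promoted to the first position
    (MHp : Matrix (Fin 1 ⊕ (Fin r ⊕ Fin s)) (Fin 1 ⊕ (Fin r ⊕ Fin s)) R)
    (hMHp : MHp = Matrix.fromBlocks 0
      (Matrix.of fun _ j => Sum.elim γ δ j)
      (Matrix.of fun i _ => -(Sum.elim γ δ i))
      (Matrix.fromBlocks E F G H))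
    -- `M` : the skew-adjacency matrix of the coalescence `G · H`
    (M : Matrix (Fin p ⊕ (Fin 1 ⊕ (Fin q ⊕ (Fin r ⊕ Fin s))))
        (Fin p ⊕ (Fin 1 ⊕ (Fin q ⊕ (Fin r ⊕ Fin s)))) R)
    (hM : M = Matrix.fromBlocks A
      (Matrix.of fun i j =>
        Sum.elim (fun _ => α i) (Sum.elim (fun b => B i b) (fun _ => (0 : R))) j)
      (Matrix.of fun i j =>
        Sum.elim (fun _ => -α j) (Sum.elim (fun a => C a j) (fun _ => (0 : R))) i)
      (Matrix.fromBlocks 0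
        (Matrix.of fun _ j => Sum.elim β (Sum.elim γ δ) j)
        (Matrix.of fun i _ => -(Sum.elim β (Sum.elim γ δ) i))
        (Matrix.fromBlocks D 0 0 (Matrix.fromBlocks E F G H)))) :
    M.charpoly
      = MG.charpoly * MHv.charpoly + MGu.charpoly * MHp.charpoly
        - X * MGu.charpoly * MHv.charpoly := by
  classical
  have key := det_coalescence_aux (S := R[X]) (charmatrix MGu) (charmatrix MHv)
      (Sum.elim (fun i => Polynomial.C (α i)) (fun j => -Polynomial.C (β j)))
      (Sum.elim (fun i => -Polynomial.C (α i)) (fun j => Polynomial.C (β j)))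
      (fun j => -Polynomial.C (Sum.elim γ δ j))
      (fun i => Polynomial.C (Sum.elim γ δ i)) (X : R[X])
  have hMcp : M.charpoly
      = ((charmatrix M).submatrix (eqM p q r s) (eqM p q r s)).det :=
    (Matrix.det_submatrix_equiv_self _ _).symm
  have h1 : (charmatrix M).submatrix (eqM p q r s) (eqM p q r s)
      = Matrix.fromBlocks (charmatrix MGu)
          (Matrix.of fun i j => Sum.elim
            (fun _ : Fin 1 => Sum.elim (fun i => -Polynomial.C (α i))
              (fun j => Polynomial.C (β j)) i)
            (fun _ : Fin r ⊕ Fin s => (0 : R[X])) j)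
          (Matrix.of fun i j => Sum.elim
            (fun _ : Fin 1 => Sum.elim (fun i => Polynomial.C (α i))
              (fun j => -Polynomial.C (β j)) j)
            (fun _ : Fin r ⊕ Fin s => (0 : R[X])) i)
          (Matrix.fromBlocks (Matrix.of fun _ _ => (X : R[X]))
            (Matrix.of fun _ j => -Polynomial.C (Sum.elim γ δ j))
            (Matrix.of fun i _ => Polynomial.C (Sum.elim γ δ i)) (charmatrix MHv)) := by
    subst hM hMGu hMHv
    ext i j
    rcases i with ((i | i) | (i | (i | i))) <;> rcases j with ((j | j) | (j | (j | j))) <;>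
      simp [eqM, charmatrix_apply, Matrix.diagonal_apply, eq_iff_true_of_subsingleton]
  have hGdet : (Matrix.fromBlocks (charmatrix MGu)
      (Matrix.of fun i (_ : Fin 1) => Sum.elim (fun i => -Polynomial.C (α i))
        (fun j => Polynomial.C (β j)) i)
      (Matrix.of fun (_ : Fin 1) j => Sum.elim (fun i => Polynomial.C (α i))
        (fun j => -Polynomial.C (β j)) j)
      (Matrix.of fun _ _ => (X : R[X]))).det = MG.charpoly := by
    rw [Matrix.charpoly, ← Matrix.det_submatrix_equiv_self (eqG2 p q) (charmatrix MG)]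
    congr 1
    subst hMG hMGu
    ext i j
    rcases i with ((i | i) | i) <;> rcases j with ((j | j) | j) <;>
      simp [eqG2, charmatrix_apply, Matrix.diagonal_apply, eq_iff_true_of_subsingleton]
  have hHdet : (Matrix.fromBlocks (Matrix.of fun (_ : Fin 1) (_ : Fin 1) => (X : R[X]))
      (Matrix.of fun _ j => -Polynomial.C (Sum.elim γ δ j))
      (Matrix.of fun i _ => Polynomial.C (Sum.elim γ δ i)) (charmatrix MHv)).det
      = MHp.charpoly := by
    rw [Matrix.charpoly]
    congr 1
    subst hMHp hMHv
    ext i j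
    rcases i with (i | (i | i)) <;> rcases j with (j | (j | j)) <;>
      simp [charmatrix_apply, Matrix.diagonal_apply, eq_iff_true_of_subsingleton]
  rw [hMcp, h1, key, hGdet, hHdet]
  rfl
end

section
/- For each natural number n ≥ 1 let T_n be the n×n rational matrix with (i,j) entry equal to 1 if j = i+1, equal to −1 if i = j+1, and 0 otherwise (the skew-adjacency matrix of the linearly ordered path P_n). Then in ℚ[X]: 2^n · charpoly(T_n) = Σ_{j=0}^{⌊n/2⌋} C(n+1, 2j+1) · X^{n−2j} · (X² + 4)^j, where C(n+1, 2j+1) is a binomial coefficient. -/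
open Polynomial Matrix

/-- The skew-adjacency matrix of the linearly ordered path `P_n`. -/
def pathSkew (n : ℕ) : Matrix (Fin n) (Fin n) ℚ :=
  Matrix.of fun i j =>
    if (j : ℕ) = (i : ℕ) + 1 then 1 else if (i : ℕ) = (j : ℕ) + 1 then -1 else 0

noncomputable def Mm (n : ℕ) : Matrix (Fin n) (Fin n) ℚ[X] :=
  Matrix.of fun i j =>
    if (i : ℕ) = (j : ℕ) then X else if (j : ℕ) = (i : ℕ) + 1 then -1
    else if (i : ℕ) = (j : ℕ) + 1 then 1 else 0

lemma Mm_apply (n : ℕ) (i j : Fin n) : Mm n i j =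
    (if (i : ℕ) = (j : ℕ) then X else if (j : ℕ) = (i : ℕ) + 1 then -1
    else if (i : ℕ) = (j : ℕ) + 1 then (1:ℚ[X]) else 0) := rfl

lemma charmatrix_pathSkew (n : ℕ) : charmatrix (pathSkew n) = Mm n := by
  ext i j
  by_cases h : i = j
  · subst h
    simp [charmatrix_apply_eq, pathSkew, Mm]
  · have h' : (i : ℕ) ≠ (j : ℕ) := fun hc => h (Fin.ext hc)
    rw [charmatrix_apply_ne _ _ _ h]
    simp only [pathSkew, Mm, Matrix.of_apply]
    split_ifs <;> simp_all

lemma Mm_succ_succ (n : ℕ) (i j : Fin (n+1)) : Mm (n+2) i.succ j.succ = Mm (n+1) i j := by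
  simp only [Mm_apply, Fin.val_succ]
  split_ifs <;> first | rfl | omega | simp_all

lemma Mm_two (n : ℕ) (i j : Fin n) : Mm (n+2) i.succ.succ j.succ.succ = Mm n i j := by
  simp only [Mm_apply, Fin.val_succ]
  split_ifs <;> first | rfl | omega | simp_all

lemma det_Mm_rec (n : ℕ) :
    (Mm (n+2)).det = X * (Mm (n+1)).det + (Mm n).det := by
  rw [det_succ_row_zero]
  rw [Fin.sum_univ_succ, Fin.sum_univ_succ]
  have h0 : Mm (n+2) 0 0 = X := by rw [Mm_apply]; norm_num
  have h1 : Mm (n+2) 0 (Fin.succ 0) = -1 := by rw [Mm_apply]; norm_num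
  have hz : ∀ j : Fin n, Mm (n+2) 0 j.succ.succ = 0 := by
    intro j
    rw [Mm_apply]
    simp only [Fin.val_succ, Fin.val_zero]
    split_ifs <;> first | rfl | simp_all | omega
  have hsub0 : (Mm (n+2)).submatrix Fin.succ ((0 : Fin (n+2)).succAbove) = Mm (n+1) := by
    refine Matrix.ext fun i j => ?_
    rw [Fin.succAbove_zero]
    exact Mm_succ_succ n i j
  have hcol0 : (Fin.succ 0 : Fin (n+2)).succAbove 0 = 0 := by
    rw [Fin.succ_succAbove_zero]
  have hsub1 : ((Mm (n+2)).submatrix Fin.succ ((Fin.succ 0 : Fin (n+2)).succAbove)).det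
      = (Mm n).det := by
    rw [det_succ_column_zero, Fin.sum_univ_succ]
    have e0 : ((Mm (n+2)).submatrix Fin.succ ((Fin.succ 0 : Fin (n+2)).succAbove)) 0 0 = 1 := by
      rw [Matrix.submatrix_apply, hcol0, Mm_apply]
      norm_num
    have ez : ∀ i : Fin n,
        ((Mm (n+2)).submatrix Fin.succ ((Fin.succ 0 : Fin (n+2)).succAbove)) i.succ 0 = 0 := by
      intro i
      rw [Matrix.submatrix_apply, hcol0, Mm_apply]
      simp only [Fin.val_succ, Fin.val_zero]
      split_ifs <;> first | rfl | simp_all | omega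
    have esub : (((Mm (n+2)).submatrix Fin.succ ((Fin.succ 0 : Fin (n+2)).succAbove)).submatrix
        ((0 : Fin (n+1)).succAbove) Fin.succ) = Mm n := by
      refine Matrix.ext fun i j => ?_
      rw [Fin.succAbove_zero]
      simp only [Matrix.submatrix_apply]
      rw [Fin.succ_succAbove_succ, Fin.succAbove_zero]
      exact Mm_two n i j
    rw [e0, esub]
    simp only [ez, mul_zero, zero_mul, Finset.sum_const_zero]
    simp
  rw [h0, h1, hsub0, hsub1]
  simp only [hz, mul_zero, zero_mul, Finset.sum_const_zero]
  simp only [Fin.val_zero, Fin.val_succ, pow_zero, pow_one, zero_add]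
  ring

noncomputable def Jm : Matrix (Fin 2) (Fin 2) ℚ[X] := !![0, (X:ℚ[X])^2+4; 1, 0]
noncomputable def Bm : Matrix (Fin 2) (Fin 2) ℚ[X] := Jm + (X:ℚ[X]) • 1

lemma Jm_sq : Jm * Jm = ((X:ℚ[X])^2+4) • (1 : Matrix (Fin 2) (Fin 2) ℚ[X]) := by
  ext i j
  fin_cases i <;> fin_cases j <;>
    simp [Jm, Matrix.mul_apply, Fin.sum_univ_two, Matrix.one_apply]

lemma Jm_pow_even (j : ℕ) : Jm ^ (2*j) = (((X:ℚ[X])^2+4)^j) • (1 : Matrix (Fin 2) (Fin 2) ℚ[X]) := by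
  induction j with
  | zero => simp
  | succ k ih =>
      have h2 : 2*(k+1) = 2*k + 2 := by ring
      rw [h2, pow_add, ih, show Jm^2 = Jm * Jm from pow_two Jm, Jm_sq, smul_mul_assoc, one_mul, smul_smul, ← pow_succ]

lemma Jm_pow_odd (j : ℕ) : Jm ^ (2*j+1) = (((X:ℚ[X])^2+4)^j) • Jm := by
  rw [pow_succ, Jm_pow_even, smul_mul_assoc, one_mul]

lemma Jm_pow_apply (m : ℕ) :
    (Jm ^ m) 1 0 = if m % 2 = 1 then ((X:ℚ[X])^2+4)^(m/2) else 0 := by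
  rcases Nat.even_or_odd m with ⟨j, hj⟩ | ⟨j, hj⟩
  · have : m = 2*j := by omega
    subst this
    rw [Jm_pow_even]
    have : (2*j) % 2 = 0 := by omega
    simp [this, Matrix.one_apply]
  · subst hj
    rw [Jm_pow_odd]
    have h1 : (2*j+1) % 2 = 1 := by omega
    have h2 : (2*j+1) / 2 = j := by omega
    simp [h1, h2, Jm]

lemma natCast_mat (c : ℕ) :
    ((c : ℕ) : Matrix (Fin 2) (Fin 2) ℚ[X]) = ((c : ℚ[X])) • (1 : Matrix (Fin 2) (Fin 2) ℚ[X]) := by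
  ext i j
  rw [← Matrix.diagonal_natCast]
  by_cases h : i = j <;> simp [Matrix.diagonal_apply, Matrix.one_apply, h]

lemma Bm_pow (n : ℕ) : Bm ^ n
    = ∑ m ∈ Finset.range (n+1), ((X:ℚ[X])^(n-m) * (n.choose m : ℚ[X])) • Jm ^ m := by
  have hc : Commute Jm ((X:ℚ[X]) • (1 : Matrix (Fin 2) (Fin 2) ℚ[X])) := by
    apply Commute.smul_right
    exact Commute.one_right Jm
  rw [Bm, hc.add_pow]
  refine Finset.sum_congr rfl fun m hm => ?_
  rw [_root_.smul_pow, one_pow, natCast_mat, mul_smul_comm, mul_smul_comm, mul_one, mul_one,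
    smul_smul, mul_comm]

noncomputable def sPoly (n : ℕ) : ℚ[X] := (Bm ^ (n+1)) 1 0

lemma sPoly_eq_sum (n : ℕ) : sPoly n
    = ∑ j ∈ Finset.range (n/2+1),
        ((n + 1).choose (2 * j + 1) : ℚ[X]) * X ^ (n - 2 * j) * ((X:ℚ[X]) ^ 2 + 4) ^ j := by
  rw [sPoly, Bm_pow, Matrix.sum_apply]
  have hterm : ∀ m, (((X:ℚ[X])^(n+1-m) * ((n+1).choose m : ℚ[X])) • Jm ^ m) 1 0
      = ((X:ℚ[X])^(n+1-m) * ((n+1).choose m : ℚ[X]))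
        * (if m % 2 = 1 then ((X:ℚ[X])^2+4)^(m/2) else 0) := by
    intro m
    rw [Matrix.smul_apply, Jm_pow_apply, smul_eq_mul]
  simp only [hterm]
  rw [← Finset.sum_filter_of_ne (p := fun m => m % 2 = 1) (s := Finset.range (n+2))]
  · refine (Finset.sum_nbij' (fun j => 2*j+1) (fun m => m/2) ?_ ?_ ?_ ?_ ?_).symm
    · intro j hj
      simp only [Finset.mem_filter, Finset.mem_range] at *
      omega
    · intro m hm
      simp only [Finset.mem_filter, Finset.mem_range] at *
      omega
    · intro j hj; omega
    · intro m hm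
      simp only [Finset.mem_filter, Finset.mem_range] at hm
      omega
    · intro j hj
      have h1 : (2*j+1) % 2 = 1 := by omega
      have h2 : (2*j+1) / 2 = j := by omega
      have h3 : n + 1 - (2*j+1) = n - 2*j := by omega
      rw [h1, h2, h3, if_pos rfl]
      ring
  · intro m hm hne
    by_contra h
    apply hne
    rw [if_neg h, mul_zero]

lemma Bm_sq : Bm * Bm = (2*(X:ℚ[X])) • Bm + (4:ℚ[X]) • (1 : Matrix (Fin 2) (Fin 2) ℚ[X]) := by
  refine Matrix.ext fun i j => ?_
  fin_cases i <;> fin_cases j <;>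
    (simp [Bm, Jm, Matrix.mul_apply, Fin.sum_univ_two, Matrix.one_apply]; try ring)

lemma sPoly_rec (n : ℕ) : sPoly (n+2) = 2*(X:ℚ[X])*sPoly (n+1) + 4*sPoly n := by
  have h : Bm ^ (n+3) = Bm ^ (n+1) * (Bm * Bm) := by
    rw [← pow_two, ← pow_add]
  rw [sPoly, h, Bm_sq, mul_add, mul_smul_comm, mul_smul_comm, mul_one,
    show Bm ^ (n+1) * Bm = Bm ^ (n+2) from (pow_succ Bm (n+1)).symm]
  rw [Matrix.add_apply, Matrix.smul_apply, Matrix.smul_apply, smul_eq_mul, smul_eq_mul]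
  rfl

lemma sPoly_zero : sPoly 0 = 1 := by
  simp [sPoly, Bm, Jm, Matrix.add_apply, Matrix.smul_apply, Matrix.one_apply]

lemma sPoly_one : sPoly 1 = 2*(X:ℚ[X]) := by
  rw [sPoly, show Bm ^ (1+1) = Bm * Bm from (pow_two Bm), Bm_sq]
  rw [Matrix.add_apply, Matrix.smul_apply, Matrix.smul_apply, smul_eq_mul, smul_eq_mul]
  have h1 : Bm 1 0 = 1 := by simp [Bm, Jm, Matrix.add_apply, Matrix.smul_apply, Matrix.one_apply]
  have h2 : (1 : Matrix (Fin 2) (Fin 2) ℚ[X]) 1 0 = 0 := by simp [Matrix.one_apply]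
  rw [h1, h2, mul_one, mul_zero, add_zero]

lemma key (n : ℕ) : (2^n : ℚ[X]) * (Mm n).det = sPoly n := by
  have main : ∀ m : ℕ, (2^m : ℚ[X]) * (Mm m).det = sPoly m ∧
      (2^(m+1) : ℚ[X]) * (Mm (m+1)).det = sPoly (m+1) := by
    intro m
    induction m with
    | zero =>
        constructor
        · rw [sPoly_zero, Matrix.det_isEmpty]
          norm_num
        · rw [sPoly_one, show (Mm 1).det = Mm 1 0 0 from Matrix.det_fin_one _,
            show Mm 1 0 0 = X from rfl]
          norm_num
    | succ k ih =>
        refine ⟨ih.2, ?_⟩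
        rw [det_Mm_rec, sPoly_rec, ← ih.1, ← ih.2]
        ring
  exact (main n).1

/-- the characteristic polynomial of the skew-adjacency matrix of the
linearly ordered path `P_n` as a binomial sum. -/
theorem charpoly_pathSkew_sum (n : ℕ) (hn : 1 ≤ n) :
    (2 ^ n : ℚ[X]) * (pathSkew n).charpoly
      = ∑ j ∈ Finset.range (n / 2 + 1),
          ((n + 1).choose (2 * j + 1) : ℚ[X]) * X ^ (n - 2 * j) * (X ^ 2 + 4) ^ j := by

  have h1 : (pathSkew n).charpoly = (Mm n).det := by
    rw [show (pathSkew n).charpoly = (charmatrix (pathSkew n)).det from rfl,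
      charmatrix_pathSkew]
  rw [h1, key, sPoly_eq_sum]
end

section
/- For each natural number n ≥ 1 let A_n be the n×n rational matrix with (i,j) entry equal to 1 if i < j, equal to −1 if i > j, and 0 if i = j (the skew-adjacency matrix of the linearly ordered complete graph K_n). Then in ℚ[X]: charpoly(A_n) = ((X−1)^n + (X+1)^n)/2; equivalently, 2 · charpoly(A_n) = (X−1)^n + (X+1)^n. -/
open Polynomial Matrix

/-- The skew-adjacency matrix of the linearly ordered complete graph `K_n`, over `ℚ`. -/
def completeSkewQ (n : ℕ) : Matrix (Fin n) (Fin n) ℚ :=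
  Matrix.of fun i j => if i < j then 1 else if j < i then -1 else 0

noncomputable def MM (n : ℕ) : Matrix (Fin n) (Fin n) ℚ[X] :=
  Matrix.of fun i j => if i = j then X else if i < j then -1 else 1

noncomputable def NN (n : ℕ) : Matrix (Fin (n + 1)) (Fin (n + 1)) ℚ[X] :=
  Matrix.of fun i j => if j = 0 then 1 else if i = j then X else if i < j then -1 else 1

lemma NN_sub (n : ℕ) :
    (NN (n + 1)).submatrix Fin.succ ((1 : Fin (n + 2)).succAbove) = NN n := by
  ext i j
  induction j using Fin.cases with
  | zero =>
    have h : (1 : Fin (n + 2)).succAbove 0 = 0 := rfl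
    simp [h, NN, Matrix.submatrix_apply]
  | succ k =>
    have h : (1 : Fin (n + 2)).succAbove k.succ = k.succ.succ := by
      simp [Fin.succAbove, Fin.lt_def]
    simp only [Matrix.submatrix_apply, h, NN, Matrix.of_apply]
    have h1 : k.succ.succ ≠ (0 : Fin (n + 2)) := Fin.succ_ne_zero _
    have h2 : k.succ ≠ (0 : Fin (n + 1)) := Fin.succ_ne_zero _
    simp [h1, h2, Fin.succ_inj, Fin.succ_lt_succ_iff]

lemma NN_det : ∀ n : ℕ, (NN n).det = (X + 1) ^ n := by
  intro n
  induction n with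
  | zero => simp [Matrix.det_fin_one, NN]
  | succ n ih =>
    have h0 : (NN (n + 1)).det
        = (updateRow (NN (n + 1)) 0 (NN (n + 1) 0 + (-1 : ℚ[X]) • NN (n + 1) 1)).det := by
      rw [det_updateRow_add_smul_self _ (by simp : (0 : Fin (n+2)) ≠ 1)]
    set Z := updateRow (NN (n + 1)) 0 (NN (n + 1) 0 + (-1 : ℚ[X]) • NN (n + 1) 1) with hZ
    have hZ0 : ∀ j, Z 0 j = NN (n + 1) 0 j - NN (n + 1) 1 j := by
      intro j; simp [hZ, Matrix.updateRow_self, sub_eq_add_neg]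
    have hrow : ∀ j : Fin (n + 2), Z 0 j = if j = 1 then -1 - X else 0 := by
      intro j
      rcases eq_or_ne j 0 with rfl | hj0
      · simp [hZ0, NN]
      rcases eq_or_ne j 1 with rfl | hj1
      · have : (0 : Fin (n+2)) < 1 := by simp [Fin.lt_iff_val_lt_val]
        simp [hZ0, NN, this, Ne.symm (by simp : (0:Fin (n+2)) ≠ 1)]
      · have hj0' : (0 : Fin (n + 2)) < j := Fin.pos_of_ne_zero hj0
        have hj1' : (1 : Fin (n + 2)) < j := by
          rcases lt_trichotomy (1 : Fin (n+2)) j with h | h | h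
          · exact h
          · exact absurd h.symm hj1
          · exact absurd ((Fin.lt_one_iff j).mp h) hj0
        simp [hZ0, NN, hj0.symm, hj0', hj1', hj1'.ne, hj1, hj1'.not_gt]
    have hsubZ : ∀ g : Fin (n + 1) → Fin (n + 2),
        Z.submatrix Fin.succ g = (NN (n + 1)).submatrix Fin.succ g := by
      intro g; ext i j
      simp [hZ, Matrix.submatrix_apply, Matrix.updateRow_ne (Fin.succ_ne_zero i)]
    rw [h0, Matrix.det_succ_row_zero]
    rw [Fin.sum_univ_succ, Fin.sum_univ_succ]
    have hz0 : Z 0 0 = 0 := by rw [hrow]; simp [Ne.symm (by simp : (0:Fin (n+2)) ≠ 1)]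
    have hz1 : Z 0 (Fin.succ 0) = -1 - X := by
      rw [hrow]; simp [Fin.ext_iff]
    have hrest : ∀ j : Fin n, Z 0 (Fin.succ (Fin.succ j)) = 0 := by
      intro j; rw [hrow]
      have : Fin.succ (Fin.succ j) ≠ 1 := by
        simp [Fin.ext_iff]
      simp [this]
    rw [hz0, hz1]
    simp only [hrest, mul_zero, zero_mul, Finset.sum_const_zero, add_zero]
    have hone : Fin.succ (0 : Fin (n+1)) = (1 : Fin (n+2)) := rfl
    rw [hone, hsubZ, NN_sub, ih]
    simp only [Fin.val_zero, Fin.val_one, pow_zero, pow_one]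
    ring

lemma MM_sub1 (n : ℕ) :
    (MM (n + 2)).submatrix Fin.succ ((0 : Fin (n + 2)).succAbove) = MM (n + 1) := by
  ext i j
  have h : (0 : Fin (n + 2)).succAbove j = j.succ := rfl
  simp [MM, Matrix.submatrix_apply, h, Fin.succ_inj, Fin.succ_lt_succ_iff]

lemma MM_sub2 (n : ℕ) :
    (MM (n + 2)).submatrix Fin.succ ((1 : Fin (n + 2)).succAbove) = NN n := by
  ext i j
  induction j using Fin.cases with
  | zero =>
    have h : (1 : Fin (n + 2)).succAbove 0 = 0 := rfl
    have : (0 : Fin (n + 2)) < i.succ := Fin.succ_pos i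
    simp [h, MM, NN, Matrix.submatrix_apply, this.ne', this.not_gt]
  | succ k =>
    have h : (1 : Fin (n + 2)).succAbove k.succ = k.succ.succ := by
      simp [Fin.succAbove, Fin.lt_def]
    simp only [Matrix.submatrix_apply, h, MM, NN, Matrix.of_apply]
    have h2 : k.succ ≠ (0 : Fin (n + 1)) := Fin.succ_ne_zero _
    simp [h2, Fin.succ_inj, Fin.succ_lt_succ_iff]

lemma MM_det : ∀ n : ℕ, 2 * (MM (n + 1)).det = (X - 1) ^ (n + 1) + (X + 1) ^ (n + 1) := by
  intro n
  induction n with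
  | zero => simp [Matrix.det_fin_one, MM]; ring
  | succ n ih =>
    have h0 : (MM (n + 2)).det
        = (updateRow (MM (n + 2)) 0 (MM (n + 2) 0 + (-1 : ℚ[X]) • MM (n + 2) 1)).det := by
      rw [det_updateRow_add_smul_self _ (by simp : (0 : Fin (n+2)) ≠ 1)]
    set Z := updateRow (MM (n + 2)) 0 (MM (n + 2) 0 + (-1 : ℚ[X]) • MM (n + 2) 1) with hZ
    have hZ0 : ∀ j, Z 0 j = MM (n + 2) 0 j - MM (n + 2) 1 j := by
      intro j; simp [hZ, Matrix.updateRow_self, sub_eq_add_neg]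
    have hrow : ∀ j : Fin (n + 2), Z 0 j =
        if j = 0 then X - 1 else if j = 1 then -1 - X else 0 := by
      intro j
      rcases eq_or_ne j 0 with rfl | hj0
      · have : (0 : Fin (n+2)) < 1 := by simp [Fin.lt_iff_val_lt_val]
        simp [hZ0, MM, Ne.symm (by simp : (0:Fin (n+2)) ≠ 1), this.not_gt]
      rcases eq_or_ne j 1 with rfl | hj1
      · have : (0 : Fin (n+2)) < 1 := by simp [Fin.lt_iff_val_lt_val]
        simp [hZ0, MM, this, Ne.symm (by simp : (0:Fin (n+2)) ≠ 1), hj0]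
      · have hj0' : (0 : Fin (n + 2)) < j := Fin.pos_of_ne_zero hj0
        have hj1' : (1 : Fin (n + 2)) < j := by
          rcases lt_trichotomy (1 : Fin (n+2)) j with h | h | h
          · exact h
          · exact absurd h.symm hj1
          · exact absurd ((Fin.lt_one_iff j).mp h) hj0
        simp [hZ0, MM, hj0.symm, hj0', hj1', hj1'.ne, hj0, hj1]
    have hsubZ : ∀ g : Fin (n + 1) → Fin (n + 2),
        Z.submatrix Fin.succ g = (MM (n + 2)).submatrix Fin.succ g := by
      intro g; ext i j
      simp [hZ, Matrix.submatrix_apply, Matrix.updateRow_ne (Fin.succ_ne_zero i)]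
    have hdet : (MM (n + 2)).det
        = (X - 1) * (MM (n + 1)).det + (X + 1) * (X + 1) ^ n := by
      rw [h0, Matrix.det_succ_row_zero]
      rw [Fin.sum_univ_succ, Fin.sum_univ_succ]
      have hz0 : Z 0 0 = X - 1 := by rw [hrow]; simp
      have hz1 : Z 0 (Fin.succ 0) = -1 - X := by
        rw [hrow]; simp [Fin.ext_iff]
      have hrest : ∀ j : Fin n, Z 0 (Fin.succ (Fin.succ j)) = 0 := by
        intro j; rw [hrow]
        have h1 : Fin.succ (Fin.succ j) ≠ 1 := by simp [Fin.ext_iff]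
        have h0' : Fin.succ (Fin.succ j) ≠ 0 := Fin.succ_ne_zero _
        simp [h1, h0']
      rw [hz0, hz1]
      simp only [hrest, mul_zero, zero_mul, Finset.sum_const_zero, add_zero]
      have hone : Fin.succ (0 : Fin (n+1)) = (1 : Fin (n+2)) := rfl
      rw [hone, hsubZ, hsubZ, MM_sub1, MM_sub2, NN_det]
      simp only [Fin.val_zero, Fin.val_one, pow_zero, pow_one]
      ring
    rw [hdet]
    have : 2 * ((X - 1) * (MM (n + 1)).det + (X + 1) * (X + 1) ^ n)
        = (X - 1) * (2 * (MM (n + 1)).det) + 2 * (X + 1) ^ (n + 1) := by ring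
    rw [this, ih]
    ring

lemma charpoly_eq_MM (n : ℕ) : (completeSkewQ n).charpoly = (MM n).det := by
  unfold Matrix.charpoly
  congr 1
  ext i j
  rcases lt_trichotomy i j with h | h | h
  · rw [charmatrix_apply_ne _ _ _ h.ne]
    simp [completeSkewQ, MM, h, h.ne]
  · subst h
    rw [charmatrix_apply_eq]
    simp [completeSkewQ, MM]
  · rw [charmatrix_apply_ne _ _ _ h.ne']
    simp [completeSkewQ, MM, h, h.ne', h.not_gt]

/-- the characteristic polynomial of the skew-adjacency matrix of the
linearly ordered complete graph `K_n` is `((X-1)^n + (X+1)^n)/2`. -/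
theorem charpoly_completeSkew (n : ℕ) (hn : 1 ≤ n) :
    (completeSkewQ n).charpoly = Polynomial.C (1 / 2 : ℚ) * ((X - 1) ^ n + (X + 1) ^ n) ∧
      2 * (completeSkewQ n).charpoly = (X - 1) ^ n + (X + 1) ^ n := by
  obtain ⟨m, rfl⟩ : ∃ m, n = m + 1 := ⟨n - 1, (Nat.succ_pred_eq_of_pos hn).symm⟩
  have h2 : 2 * (completeSkewQ (m + 1)).charpoly = (X - 1) ^ (m + 1) + (X + 1) ^ (m + 1) := by
    rw [charpoly_eq_MM]; exact MM_det m
  refine ⟨?_, h2⟩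
  have hC : (Polynomial.C (1 / 2 : ℚ)) * 2 = 1 := by
    rw [show (2 : ℚ[X]) = Polynomial.C 2 from (map_ofNat Polynomial.C 2).symm,
      ← Polynomial.C_mul]
    norm_num
  calc (completeSkewQ (m + 1)).charpoly
      = (Polynomial.C (1 / 2 : ℚ) * 2) * (completeSkewQ (m + 1)).charpoly := by rw [hC, one_mul]
    _ = Polynomial.C (1 / 2 : ℚ) * (2 * (completeSkewQ (m + 1)).charpoly) := by ring
    _ = _ := by rw [h2]
end
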